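/- Let h, d, n be positive integers with h ≡ 0 (mod 10), and let Ω : {1,2,…} → {0,1} be a sequence containing infinitely many 1's. If a group G satisfies the identities w_{Ω,k} ≡ 1 for all k ≥ 1, then every element of G of finite order lies in the center of G. -/

import Mathlib

open scoped commutatorElement

/-- `qSeq k = (p₁ p₂ ⋯ p_k)^k` where `pᵢ` is the `i`-th prime. -/
noncomputable def qSeq (k : ℕ) : ℕ := (∏ i ∈ Finset.range k, Nat.nth Nat.Prime i) ^ k

/-- The signs `ε_j`: `+1` for `j ≡ 1,2,3,5,6 (mod 10)` and `-1` for `j ≡ 4,7,8,9,0 (mod 10)`. -/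
def epsSign (j : ℕ) : ℤ :=
  if j % 10 = 1 ∨ j % 10 = 2 ∨ j % 10 = 3 ∨ j % 10 = 5 ∨ j % 10 = 6 then 1 else -1

/-- `v_k(x,y) = [[x^d, y^d]^d, x^(d·q_k)]`. -/
noncomputable def vWord (d k : ℕ) {G : Type*} [Group G] (x y : G) : G :=
  ⁅⁅x ^ d, y ^ d⁆ ^ d, x ^ (d * qSeq k)⁆

/-- `w_{Ω,k}(x,y) = [x,y]^{Ω(k)+ε₁} v_k^{d^k n+1} [x,y]^{ε₂} v_k^{d^k n+2} ⋯ [x,y]^{ε_h} v_k^{d^k n+h}`,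
written as the ordered product over `j = 1, …, h` (index `i = j - 1`). -/
noncomputable def wWord (h d n : ℕ) (Ω : ℕ → ℕ) (k : ℕ) {G : Type*} [Group G] (x y : G) : G :=
  ((List.range h).map (fun i =>
    ⁅x, y⁆ ^ ((if i = 0 then (Ω k : ℤ) else 0) + epsSign (i + 1)) *
      vWord d k x y ^ (d ^ k * n + (i + 1)))).prod

lemma count_prime_le (n : ℕ) : Nat.count Nat.Prime (n+1) ≤ n := by
  induction n with
  | zero => simp [Nat.count_succ, Nat.not_prime_zero]
  | succ m ih =>
    rw [Nat.count_succ]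
    split <;> omega

lemma dvd_qSeq {m k : ℕ} (hm : 0 < m) (hk : m ≤ k) : m ∣ qSeq k := by
  have hk1 : 1 ≤ k := le_trans hm hk
  set P := ∏ i ∈ Finset.range k, Nat.nth Nat.Prime i with hP
  have hPne : P ≠ 0 := by
    refine Finset.prod_ne_zero_iff.mpr fun i _ => ?_
    exact (Nat.prime_nth_prime i).pos.ne'
  have hq : qSeq k ≠ 0 := pow_ne_zero _ hPne
  rw [← Nat.factorization_le_iff_dvd hm.ne' hq]
  intro p
  rcases Nat.eq_zero_or_pos (m.factorization p) with h0 | hpos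
  · simp [h0]
  · have hp : p.Prime := Nat.prime_of_mem_primeFactors
      ((Nat.support_factorization m) ▸ Finsupp.mem_support_iff.mpr hpos.ne')
    have hpdvd : p ∣ m := Nat.dvd_of_factorization_pos hpos.ne'
    have hple : p ≤ m := Nat.le_of_dvd hm hpdvd
    have hcnt : Nat.count Nat.Prime p < k := by
      obtain ⟨p', rfl⟩ : ∃ p', p = p' + 1 := ⟨p - 1, by have := hp.two_le; omega⟩
      have := count_prime_le p'
      omega
    have hpP : p ∣ P := by
      have h2 : Nat.nth Nat.Prime (Nat.count Nat.Prime p) ∣ P :=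
        Finset.dvd_prod_of_mem (fun i => Nat.nth Nat.Prime i) (Finset.mem_range.mpr hcnt)
      rwa [Nat.nth_count hp] at h2
    have hfP : 1 ≤ P.factorization p := (Nat.Prime.factorization_pos_of_dvd hp hPne hpP)
    have : m.factorization p < m := Nat.factorization_lt p hm.ne'
    calc m.factorization p ≤ k := by omega
      _ ≤ k * P.factorization p := Nat.le_mul_of_pos_right k hfP
      _ = (qSeq k).factorization p := by
          rw [qSeq, Nat.factorization_pow]; simp [hP]

lemma epsSign_add_ten (j : ℕ) : epsSign (j + 10) = epsSign j := by
  simp [epsSign, Nat.add_mod]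

lemma epsSign_mul_add (s i : ℕ) : epsSign (10 * s + i + 1) = epsSign (i + 1) := by
  induction s with
  | zero => simp
  | succ u ihu =>
    have h : 10 * (u + 1) + i + 1 = (10 * u + i + 1) + 10 := by ring
    rw [h, epsSign_add_ten, ihu]

lemma eps_sum (t : ℕ) : ∑ i ∈ Finset.range (10 * t), epsSign (i + 1) = 0 := by
  induction t with
  | zero => simp
  | succ s ih =>
    have h : 10 * (s + 1) = 10 * s + 10 := by ring
    rw [h, Finset.sum_range_add, ih, zero_add]
    simp only [epsSign_mul_add]
    decide

lemma prod_zpow (G : Type*) [Group G] (c : G) (e : ℕ → ℤ) (m : ℕ) :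
    ((List.range m).map (fun i => c ^ e i)).prod = c ^ (∑ i ∈ Finset.range m, e i) := by
  induction m with
  | zero => simp
  | succ s ih => rw [List.range_succ, Finset.sum_range_succ, List.map_append, List.prod_append,
      ih, zpow_add]; simp

/-- Let `h, d, n` be positive with `h ≡ 0 (mod 10)` and let `Ω` be a `{0,1}`-valued sequence with
infinitely many `1`'s. In any group satisfying the identities `w_{Ω,k} ≡ 1` for all `k ≥ 1`,
every element of finite order lies in the center. -/
theorem stmt4 (h d n : ℕ) (hh : 0 < h) (hd : 0 < d) (hn : 0 < n) (h10 : h % 10 = 0)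
    (Ω : ℕ → ℕ) (hΩ : ∀ k, 1 ≤ k → Ω k = 0 ∨ Ω k = 1)
    (hinf : ∀ N, ∃ k, N ≤ k ∧ 1 ≤ k ∧ Ω k = 1)
    (G : Type*) [Group G]
    (hid : ∀ k, 1 ≤ k → ∀ x y : G, wWord h d n Ω k x y = 1) :
    ∀ g : G, IsOfFinOrder g → g ∈ Subgroup.center G := by
  intro g hg
  rw [Subgroup.mem_center_iff]
  intro y
  set m := orderOf g with hm
  have hm0 : 0 < m := hg.orderOf_pos
  obtain ⟨k, hkm, hk1, hΩk⟩ := hinf m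
  -- g ^ (d * qSeq k) = 1
  have hdvd : m ∣ d * qSeq k := Dvd.dvd.mul_left (dvd_qSeq hm0 hkm) d
  have hgpow : g ^ (d * qSeq k) = 1 := by
    rw [← orderOf_dvd_iff_pow_eq_one]; exact hdvd
  have hv : vWord d k g y = 1 := by
    rw [vWord, hgpow, commutatorElement_def]; group
  -- the identity collapses
  have hw := hid k hk1 g y
  rw [wWord] at hw
  have hcol : ((List.range h).map (fun i =>
      ⁅g, y⁆ ^ ((if i = 0 then (Ω k : ℤ) else 0) + epsSign (i + 1)) *
        vWord d k g y ^ (d ^ k * n + (i + 1)))).prod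
      = ⁅g, y⁆ ^ (∑ i ∈ Finset.range h, ((if i = 0 then (Ω k : ℤ) else 0) + epsSign (i + 1))) := by
    rw [← prod_zpow G ⁅g, y⁆ (fun i => (if i = 0 then (Ω k : ℤ) else 0) + epsSign (i + 1)) h]
    congr 1
    apply List.map_congr_left
    intro i _
    rw [hv, one_pow, mul_one]
  rw [hcol] at hw
  have hsum : (∑ i ∈ Finset.range h, ((if i = 0 then (Ω k : ℤ) else 0) + epsSign (i + 1))) = 1 := by
    rw [Finset.sum_add_distrib]
    obtain ⟨t, rfl⟩ : ∃ t, h = 10 * t := ⟨h / 10, by omega⟩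
    rw [eps_sum]
    rw [Finset.sum_ite_eq' (Finset.range (10 * t)) 0 (fun _ => (Ω k : ℤ))]
    simp [Finset.mem_range.mpr hh, hΩk]
  rw [hsum, zpow_one] at hw
  have := commutatorElement_eq_one_iff_mul_comm.mp hw
  exact this.symm
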